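/- arXiv:1410.4378 — 2 statements merged into one kernel-verified Lean document; each statement's English description precedes it below -/
import Mathlib

section
/- (Privacy bound for the toric secret sharing scheme.) Let U ⊆ H be a subset, set −H∖−U = {−m : m ∈ H, m ∉ U}, and let z' be a natural number such that every nonzero g ∈ 𝔽_q<−H∖−U> vanishes at no more than z' points of the torus (𝔽_q^*)^r. Fix P_0 ∈ (𝔽_q^*)^r and let A ⊆ (𝔽_q^*)^r ∖ {P_0} with |A| ≤ (q−1)^r − z' − 2. Then for every f ∈ 𝔽_q<U> and every s ∈ 𝔽_q there exists g ∈ 𝔽_q<U> with g(P) = f(P) for all P ∈ A and g(P_0) = s; i.e., any (q−1)^r − z' − 2 shares reveal no information about the secret. -/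
open scoped BigOperators

/-- Evaluation of a Laurent polynomial (given by its finitely supported coefficient
function on exponent vectors in `ℤ^r`) at a point of the torus `(Kˣ)^r`. -/
noncomputable def laurentEval {K : Type} [Field K] {r : ℕ}
    (f : (Fin r → ℤ) →₀ K) (P : Fin r → Kˣ) : K :=
  ∑ u ∈ f.support, f u * ∏ i, ((P i ^ u i : Kˣ) : K)

/-- The hypercube `H = {0, 1, …, q-2}^r ⊂ ℤ^r`. -/
def Hset (q r : ℕ) : Set (Fin r → ℤ) := {m | ∀ i, 0 ≤ m i ∧ m i ≤ (q : ℤ) - 2}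

/-- `laurentEval` at a fixed point, as a linear map in the coefficient function. -/
noncomputable def evalLM {K : Type} [Field K] {r : ℕ} (P : Fin r → Kˣ) :
    ((Fin r → ℤ) →₀ K) →ₗ[K] K :=
  Finsupp.lsum K (fun u => LinearMap.toSpanSingleton K K (∏ i, ((P i ^ u i : Kˣ) : K)))

lemma laurentEval_eq {K : Type} [Field K] {r : ℕ} (f : (Fin r → ℤ) →₀ K) (P : Fin r → Kˣ) :
    laurentEval f P = evalLM P f := by
  simp [laurentEval, evalLM, Finsupp.sum, LinearMap.toSpanSingleton_apply, smul_eq_mul]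

lemma laurentEval_single {K : Type} [Field K] {r : ℕ} (u : Fin r → ℤ) (c : K) (P : Fin r → Kˣ) :
    laurentEval (Finsupp.single u c) P = c * ∏ i, ((P i ^ u i : Kˣ) : K) := by
  rw [laurentEval_eq]
  simp [evalLM, LinearMap.toSpanSingleton_apply, smul_eq_mul]

/-- Geometric sum over a finite field, `x = 1` case. -/
lemma geom_units_one {K : Type} [Field K] [Fintype K] (q : ℕ) (hq : Fintype.card K = q)
    (x : Kˣ) (hx : x = 1) :
    ∑ k ∈ Finset.range (q - 1), ((x : K)) ^ k = (-1 : K) := by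
  have hq2 : 2 ≤ q := hq ▸ Fintype.one_lt_card
  subst hx
  have hcast : ((q : K)) = 0 := by rw [← hq]; exact FiniteField.cast_card_eq_zero K
  simp only [Units.val_one, one_pow, Finset.sum_const, Finset.card_range, nsmul_eq_mul, mul_one]
  rw [Nat.cast_sub (by omega : 1 ≤ q), Nat.cast_one, hcast]
  ring

/-- Geometric sum over a finite field, `x ≠ 1` case. -/
lemma geom_units_ne {K : Type} [Field K] [Fintype K] (q : ℕ) (hq : Fintype.card K = q)
    (x : Kˣ) (hx : x ≠ 1) :
    ∑ k ∈ Finset.range (q - 1), ((x : K)) ^ k = 0 := by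
  classical
  have hx1 : (x : K) ≠ 1 := fun hc => hx (Units.ext hc)
  rw [geom_sum_eq hx1]
  have hpow : x ^ (q - 1) = 1 := by
    have h1 : x ^ Fintype.card Kˣ = 1 := pow_card_eq_one
    rwa [Fintype.card_units, hq] at h1
  have : (x : K) ^ (q - 1) = 1 := by
    rw [← Units.val_pow_eq_pow_val, hpow, Units.val_one]
  rw [this]
  simp

/-- Surjectivity criterion for a linear map into `ι → K` via linear forms. -/
lemma surj_of_forms {K : Type} [Field K] {V : Type} [AddCommGroup V] [Module K V]
    {ι : Type} [Fintype ι] (φ : V →ₗ[K] (ι → K))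
    (h : ∀ c : ι → K, c ≠ 0 → ∃ v, ∑ i, c i * φ v i ≠ 0) :
    Function.Surjective φ := by
  classical
  rw [← LinearMap.range_eq_top]
  by_contra hr
  obtain ⟨ψ, hψ0, hψ⟩ := Submodule.exists_dual_map_eq_bot_of_lt_top
    (lt_top_iff_ne_top.mpr hr) inferInstance
  set c : ι → K := fun i => ψ (Pi.single i 1) with hc
  have hpsi : ∀ x : ι → K, ψ x = ∑ i, c i * x i := by
    intro x
    have hx : x = ∑ i, x i • (Pi.single i 1 : ι → K) := by
      funext j
      simp [Finset.sum_apply, Pi.single_apply]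
    conv_lhs => rw [hx]
    rw [map_sum]
    refine Finset.sum_congr rfl fun i _ => ?_
    rw [map_smul]
    simp [c, smul_eq_mul, mul_comm]
  have hcne : c ≠ 0 := by
    intro h0
    apply hψ0
    apply LinearMap.ext
    intro x
    rw [hpsi, h0]
    simp
  obtain ⟨v, hv⟩ := h c hcne
  apply hv
  rw [← hpsi]
  have hmem : ψ (φ v) ∈ (LinearMap.range φ).map ψ :=
    Submodule.mem_map_of_mem (LinearMap.mem_range_self φ v)
  rw [hψ] at hmem
  exact (Submodule.mem_bot K).mp hmem

/-- privacy bound: if every nonzero `g ∈ 𝔽_q<−H∖−U>` vanishes at no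
more than `z'` torus points, then any `(q−1)^r − z' − 2` shares reveal nothing: for
any share set `A` of that size (avoiding `P₀`), any `f ∈ 𝔽_q<U>` and any desired
secret `s`, there is `g ∈ 𝔽_q<U>` with the same shares on `A` and `g(P₀) = s`. -/
theorem stmt8 {K : Type} [Field K] [Fintype K]
    (q : ℕ) (hq : Fintype.card K = q) {r : ℕ}
    (U : Set (Fin r → ℤ)) (hUH : U ⊆ Hset q r)
    (z' : ℕ)
    (hz' : ∀ g : (Fin r → ℤ) →₀ K, ↑g.support ⊆ (fun m => -m) '' (Hset q r \ U) →
      g ≠ 0 → Nat.card {P : Fin r → Kˣ | laurentEval g P = 0} ≤ z')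
    (P₀ : Fin r → Kˣ) (A : Finset (Fin r → Kˣ)) (hP₀ : P₀ ∉ A)
    (hA : (A.card : ℤ) ≤ ((q : ℤ) - 1) ^ r - z' - 2)
    (f : (Fin r → ℤ) →₀ K) (hf : ↑f.support ⊆ U) (s : K) :
    ∃ g : (Fin r → ℤ) →₀ K, ↑g.support ⊆ U ∧
      (∀ P ∈ A, laurentEval g P = laurentEval f P) ∧ laurentEval g P₀ = s := by
  classical
  have hq2 : 2 ≤ q := hq ▸ Fintype.one_lt_card
  set B : Finset (Fin r → Kˣ) := insert P₀ A with hB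
  set V := Finsupp.supported K K U with hV
  let φ : V →ₗ[K] ((↥B) → K) :=
    (LinearMap.pi (fun Q : ↥B => evalLM (Q : Fin r → Kˣ))).comp V.subtype
  have hφ : ∀ (v : V) (Q : ↥B), φ v Q = laurentEval v.1 (Q : Fin r → Kˣ) := by
    intro v Q
    rw [laurentEval_eq]
    rfl
  have hsurj : Function.Surjective φ := by
    refine @surj_of_forms K _ V (Submodule.addCommGroup V) _ ↥B _ φ ?_
    intro c hc
    by_contra hall
    push_neg at hall
    set c' : (Fin r → Kˣ) → K := fun Q => if h : Q ∈ B then c ⟨Q, h⟩ else 0 with hc'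
    set b : (Fin r → ℕ) → K :=
      fun v => ∑ Q' ∈ B, c' Q' * ∏ i, ((Q' i : K)) ^ (v i) with hbdef
    set g : (Fin r → ℤ) →₀ K :=
      ∑ v ∈ Fintype.piFinset (fun _ : Fin r => Finset.range (q - 1)),
        Finsupp.single (fun i => -((v i : ℤ))) (b v) with hg
    -- evaluation formula for g
    have hgeval : ∀ Q : Fin r → Kˣ,
        laurentEval g Q = if Q ∈ B then (-1 : K) ^ r * c' Q else 0 := by
      intro Q
      rw [laurentEval_eq, hg, map_sum]
      have step1 : ∀ v : Fin r → ℕ,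
          evalLM (K := K) Q (Finsupp.single (fun i => -((v i : ℤ))) (b v))
            = ∑ Q' ∈ B, c' Q' * ∏ i, ((Q' i * (Q i)⁻¹ : Kˣ) : K) ^ (v i) := by
        intro v
        rw [← laurentEval_eq, laurentEval_single, hbdef]
        rw [Finset.sum_mul]
        refine Finset.sum_congr rfl fun Q' _ => ?_
        rw [mul_assoc, ← Finset.prod_mul_distrib]
        congr 1
        refine Finset.prod_congr rfl fun i _ => ?_
        rw [zpow_neg, zpow_natCast]
        push_cast
        rw [mul_pow, inv_pow]
      rw [Finset.sum_congr rfl (fun v _ => step1 v), Finset.sum_comm]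
      have step2 : ∀ Q' ∈ B,
          (∑ v ∈ Fintype.piFinset (fun _ : Fin r => Finset.range (q - 1)),
            c' Q' * ∏ i, ((Q' i * (Q i)⁻¹ : Kˣ) : K) ^ (v i))
          = c' Q' * (if Q' = Q then (-1 : K) ^ r else 0) := by
        intro Q' _
        rw [← Finset.mul_sum]
        congr 1
        rw [← Finset.prod_univ_sum]
        have step3 : ∀ i : Fin r,
            (∑ k ∈ Finset.range (q - 1), ((Q' i * (Q i)⁻¹ : Kˣ) : K) ^ k)
              = if Q' i = Q i then (-1 : K) else 0 := by
          intro i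
          rcases eq_or_ne (Q' i) (Q i) with h | h
          · rw [if_pos h]
            exact geom_units_one q hq _ (by rw [h, mul_inv_cancel])
          · rw [if_neg h]
            exact geom_units_ne q hq _ (by rwa [Ne, mul_inv_eq_one])
        rw [Finset.prod_congr rfl (fun i _ => step3 i)]
        rcases eq_or_ne Q' Q with h | h
        · subst h
          simp
        · rw [if_neg h]
          obtain ⟨i, hi⟩ := Function.ne_iff.mp h
          exact Finset.prod_eq_zero (Finset.mem_univ i) (if_neg hi)
      rw [Finset.sum_congr rfl step2]
      by_cases hQ : Q ∈ B
      · rw [if_pos hQ]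
        rw [Finset.sum_eq_single Q]
        · rw [if_pos rfl, mul_comm]
        · intro Q' _ hne
          rw [if_neg hne, mul_zero]
        · intro hQn
          exact absurd hQ hQn
      · rw [if_neg hQ]
        refine Finset.sum_eq_zero fun Q' hQ' => ?_
        rw [if_neg (fun hqq : Q' = Q => hQ (hqq ▸ hQ')), mul_zero]
    -- b v vanishes for exponents in U
    have hb0 : ∀ v : Fin r → ℕ, (fun i => ((v i : ℤ))) ∈ U → b v = 0 := by
      intro v hvU
      have hmem : (Finsupp.single (fun i => ((v i : ℤ))) (1 : K)) ∈ V :=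
        Finsupp.single_mem_supported K 1 hvU
      have h1 := hall ⟨_, hmem⟩
      have h2 : ∀ Q : ↥B, c Q * φ ⟨_, hmem⟩ Q
          = c' (Q : Fin r → Kˣ) * ∏ i, (((Q : Fin r → Kˣ) i : K)) ^ (v i) := by
        intro Q
        rw [hφ, laurentEval_single, one_mul]
        congr 1
        · simp [hc', Q.2]
      rw [Finset.sum_congr rfl (fun Q _ => h2 Q)] at h1
      have h3 : ∑ Q' ∈ B, c' Q' * ∏ i, ((Q' i : K)) ^ (v i) = 0 := by
        rw [← Finset.sum_coe_sort B (fun Q' => c' Q' * ∏ i, ((Q' i : K)) ^ (v i))]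
        exact h1
      exact h3
    -- support of g
    have hsupp : ↑g.support ⊆ (fun m => -m) '' (Hset q r \ U) := by
      intro m hm
      rw [hg] at hm
      have hm' := Finsupp.support_finset_sum (Finset.mem_coe.mp hm)
      obtain ⟨v, hv, hmv⟩ := Finset.mem_biUnion.mp hm'
      have hbv : b v ≠ 0 := by
        intro h0
        rw [h0, Finsupp.single_zero] at hmv
        simp at hmv
      have hmeq : m = fun i => -((v i : ℤ)) := by
        have := Finsupp.support_single_subset hmv
        simpa using this
      refine ⟨fun i => ((v i : ℤ)), ⟨?_, fun hU => hbv (hb0 v hU)⟩, ?_⟩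
      · intro i
        have hvi : v i < q - 1 := Finset.mem_range.mp ((Fintype.mem_piFinset.mp hv) i)
        constructor
        · show (0 : ℤ) ≤ ((v i : ℤ))
          positivity
        · show ((v i : ℤ)) ≤ (q : ℤ) - 2
          omega
      · rw [hmeq]
        rfl
    -- g is nonzero
    have hgne : g ≠ 0 := by
      obtain ⟨Q₀, hQ₀⟩ := Function.ne_iff.mp hc
      intro h0
      have hev := hgeval (Q₀ : Fin r → Kˣ)
      rw [h0] at hev
      have hz : laurentEval (0 : (Fin r → ℤ) →₀ K) (Q₀ : Fin r → Kˣ) = 0 := by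
        simp [laurentEval]
      rw [hz, if_pos Q₀.2] at hev
      have hcz : c' (Q₀ : Fin r → Kˣ) = 0 := by
        rcases mul_eq_zero.mp hev.symm with h | h
        · exact absurd h (pow_ne_zero _ (by norm_num))
        · exact h
      rw [hc'] at hcz
      simp only [Q₀.2, dif_pos] at hcz
      exact hQ₀ (by simpa using hcz)
    -- counting
    have hzb := hz' g hsupp hgne
    have hsub : ((↑B : Set (Fin r → Kˣ))ᶜ) ⊆ {P : Fin r → Kˣ | laurentEval g P = 0} := by
      intro Q hQ
      have hQB : Q ∉ B := hQ
      simp only [Set.mem_setOf_eq, hgeval Q, if_neg hQB]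
    have hcard1 : Nat.card ((↑B : Set (Fin r → Kˣ))ᶜ : Set _)
        ≤ Nat.card {P : Fin r → Kˣ | laurentEval g P = 0} :=
      Nat.card_mono (Set.toFinite _) hsub
    have hcompl : ((↑B : Set (Fin r → Kˣ))).ncard + ((↑B : Set (Fin r → Kˣ))ᶜ).ncard
        = Nat.card (Fin r → Kˣ) := Set.ncard_add_ncard_compl _
    have hBcard : ((↑B : Set (Fin r → Kˣ))).ncard = A.card + 1 := by
      rw [Set.ncard_coe_finset, hB, Finset.card_insert_of_notMem hP₀]
    have htorus : Nat.card (Fin r → Kˣ) = (q - 1) ^ r := by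
      rw [Nat.card_eq_fintype_card, Fintype.card_fun, Fintype.card_units, hq, Fintype.card_fin]
    have hnat : (A.card + 1) + ((↑B : Set (Fin r → Kˣ))ᶜ).ncard = (q - 1) ^ r := by
      rw [← hBcard, hcompl, htorus]
    have hkey : (A.card : ℤ) + 1 + (((↑B : Set (Fin r → Kˣ))ᶜ).ncard : ℤ)
        = ((q : ℤ) - 1) ^ r := by
      have hcast : (((q - 1 : ℕ) : ℤ)) ^ r = ((q : ℤ) - 1) ^ r := by
        have h1 : ((q - 1 : ℕ) : ℤ) = (q : ℤ) - 1 := by omega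
        rw [h1]
      rw [← hcast]
      exact_mod_cast congrArg (Nat.cast : ℕ → ℤ) hnat
    have hle : ((((↑B : Set (Fin r → Kˣ))ᶜ).ncard : ℤ)) ≤ (z' : ℤ) := by
      have h1 : ((↑B : Set (Fin r → Kˣ))ᶜ).ncard ≤ z' := by
        rw [← Nat.card_coe_set_eq]
        exact le_trans hcard1 hzb
      exact_mod_cast h1
    linarith
  -- use surjectivity
  obtain ⟨v, hv⟩ := hsurj
    (fun Q : ↥B => if (Q : Fin r → Kˣ) = P₀ then s else laurentEval f (Q : Fin r → Kˣ))
  refine ⟨v.1, (Finsupp.mem_supported K _).mp v.2, ?_, ?_⟩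
  · intro P hP
    have hPB : P ∈ B := Finset.mem_insert_of_mem hP
    have h2 : laurentEval v.1 P = if P = P₀ then s else laurentEval f P := by
      have := congrFun hv (⟨P, hPB⟩ : ↥B)
      rw [hφ] at this
      exact this
    rw [h2, if_neg (fun h : P = P₀ => hP₀ (by rw [← h]; exact hP))]
  · have hPB : P₀ ∈ B := Finset.mem_insert_self _ _
    have h2 : laurentEval v.1 P₀ = if P₀ = P₀ then s else laurentEval f P₀ := by
      have := congrFun hv (⟨P₀, hPB⟩ : ↥B)
      rw [hφ] at this
      exact this
    rw [h2, if_pos rfl]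
end

section
/- (Reconstruction threshold on the toric surface.) Let a, b be integers with 0 ≤ b ≤ a ≤ q−2 and q ≥ 3, and let U = {(i,j) ∈ ℤ² : 0 ≤ j ≤ q−2, 0 ≤ i, and (q−2)·i ≤ a(q−2) + (b−a)·j}. Fix P_0 ∈ (𝔽_q^*)² and let A ⊆ (𝔽_q^*)² ∖ {P_0} with |A| ≥ (q−1)² − (q−1−a) + 1. Then any f, g ∈ 𝔽_q<U> with f(P) = g(P) for all P ∈ A satisfy f(P_0) = g(P_0); i.e., the reconstruction threshold of the scheme M(U) is at most 1 + (q−1)² − (q−1−a). -/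
open scoped BigOperators
open scoped Classical

lemma units_zpow_coe {K : Type} [Field K] (x : Kˣ) (z : ℤ) (hz : 0 ≤ z) :
    ((x ^ z : Kˣ) : K) = (x : K) ^ z.toNat := by
  have : x ^ z = x ^ z.toNat := by rw [← zpow_natCast, Int.toNat_of_nonneg hz]
  rw [this]; push_cast; ring

lemma card_zero_le {K : Type} [Field K] [Fintype K] (c : Polynomial K) (hc : c ≠ 0) :
    (Finset.univ.filter fun x : Kˣ => c.eval (x:K) = 0).card ≤ c.natDegree := by
  have h1 : (Finset.univ.filter fun x : Kˣ => c.eval (x:K) = 0).card ≤ c.roots.toFinset.card := by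
    refine Finset.card_le_card_of_injOn (fun x : Kˣ => (x:K)) ?_ ?_
    · intro x hx
      rw [Finset.mem_coe, Multiset.mem_toFinset, Polynomial.mem_roots hc]
      exact (Finset.mem_filter.mp hx).2
    · intro x _ y _ hxy; exact Units.ext hxy
  exact h1.trans ((Multiset.toFinset_card_le _).trans (Polynomial.card_roots' c))

lemma key {K : Type} [Field K] [Fintype K]
    (q : ℕ) (hq : Fintype.card K = q) (hq3 : 3 ≤ q)
    (a : ℤ) (h : (Fin 2 → ℤ) →₀ K)
    (hsupp : ∀ u ∈ h.support, 0 ≤ u 0 ∧ u 0 ≤ a ∧ 0 ≤ u 1 ∧ u 1 ≤ (q:ℤ) - 2)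
    (hne : h ≠ 0) :
    q - 1 ≤ a.toNat +
      (Finset.univ.filter fun P : Fin 2 → Kˣ => laurentEval h P ≠ 0).card := by
  have hcardU : (Finset.univ : Finset Kˣ).card = q - 1 := by
    rw [Finset.card_univ, ← Nat.card_eq_fintype_card, Nat.card_units, Nat.card_eq_fintype_card, hq]
  -- pick u₀ in the support
  obtain ⟨u₀, hu₀⟩ : ∃ u, h u ≠ 0 := by
    by_contra hcon; push_neg at hcon; exact hne (Finsupp.ext fun u => hcon u)
  have hu₀mem : u₀ ∈ h.support := Finsupp.mem_support_iff.mpr hu₀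
  -- the coefficient polynomial in Y
  set c : Polynomial K :=
    ∑ u ∈ h.support.filter (fun u => u 0 = u₀ 0), Polynomial.C (h u) * Polynomial.X ^ (u 1).toNat
    with hc_def
  have hcc : c.coeff (u₀ 1).toNat = h u₀ := by
    rw [hc_def, Polynomial.finset_sum_coeff]
    refine Eq.trans (Finset.sum_eq_single_of_mem u₀
      (Finset.mem_filter.mpr ⟨hu₀mem, rfl⟩) ?_) (by simp)
    intro u hu hne'
    simp only [Polynomial.coeff_C_mul, Polynomial.coeff_X_pow, mul_ite, mul_one, mul_zero,
      ite_eq_right_iff]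
    intro heq
    obtain ⟨hu1, hu2⟩ := Finset.mem_filter.mp hu
    obtain ⟨h0, _, h1, _⟩ := hsupp u hu1
    obtain ⟨h0', _, h1', _⟩ := hsupp u₀ hu₀mem
    exfalso; apply hne'
    funext i
    fin_cases i
    · exact hu2
    · show u 1 = u₀ 1
      omega
  have hc0 : c ≠ 0 := fun hz => hu₀ (by rw [← hcc, hz, Polynomial.coeff_zero])
  have hcdeg : c.natDegree ≤ q - 2 := by
    rw [hc_def]
    apply Polynomial.natDegree_sum_le_of_forall_le
    intro u hu
    obtain ⟨_, _, h1, h2⟩ := hsupp u (Finset.mem_filter.mp hu).1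
    calc (Polynomial.C (h u) * Polynomial.X ^ (u 1).toNat).natDegree
        ≤ _ + _ := Polynomial.natDegree_mul_le
      _ ≤ q - 2 := by
          rw [Polynomial.natDegree_C, Polynomial.natDegree_X_pow]
          omega
  -- pick y₀ with c(y₀) ≠ 0
  obtain ⟨y₀, hy₀⟩ : ∃ y : Kˣ, c.eval (y:K) ≠ 0 := by
    by_contra hcon
    push_neg at hcon
    have h1 := card_zero_le c hc0
    have h2 : (Finset.univ.filter fun y : Kˣ => c.eval (y:K) = 0) = Finset.univ := by
      ext y; simp [hcon y]
    rw [h2, hcardU] at h1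
    omega
  -- the one-variable polynomial r
  set r : Polynomial K :=
    ∑ u ∈ h.support, Polynomial.C (h u * (y₀:K) ^ (u 1).toNat) * Polynomial.X ^ (u 0).toNat
    with hr_def
  have hfilter : h.support.filter (fun u => (u₀ 0).toNat = (u 0).toNat)
      = h.support.filter (fun u => u 0 = u₀ 0) := by
    apply Finset.filter_congr
    intro u hu
    obtain ⟨h0, _, _, _⟩ := hsupp u hu
    obtain ⟨h0', _, _, _⟩ := hsupp u₀ hu₀mem
    constructor <;> (intro hh; omega)
  have hrc : r.coeff (u₀ 0).toNat = c.eval (y₀:K) := by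
    rw [hr_def, Polynomial.finset_sum_coeff]
    simp only [Polynomial.coeff_C_mul, Polynomial.coeff_X_pow, mul_ite, mul_one, mul_zero]
    rw [← Finset.sum_filter, hfilter, hc_def]
    simp [Polynomial.eval_finset_sum]
  have hr0 : r ≠ 0 := fun hz => hy₀ (by rw [← hrc, hz, Polynomial.coeff_zero])
  have hrdeg : r.natDegree ≤ a.toNat := by
    rw [hr_def]
    apply Polynomial.natDegree_sum_le_of_forall_le
    intro u hu
    obtain ⟨h0, h1, _, _⟩ := hsupp u hu
    calc (Polynomial.C (h u * (y₀:K) ^ (u 1).toNat) * Polynomial.X ^ (u 0).toNat).natDegree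
        ≤ _ + _ := Polynomial.natDegree_mul_le
      _ ≤ a.toNat := by
          rw [Polynomial.natDegree_C, Polynomial.natDegree_X_pow]
          omega
  -- eval identity
  have heval : ∀ x : Kˣ, laurentEval h ![x, y₀] = r.eval (x:K) := by
    intro x
    rw [hr_def, laurentEval, Polynomial.eval_finset_sum]
    apply Finset.sum_congr rfl
    intro u hu
    obtain ⟨h0, _, h1, _⟩ := hsupp u hu
    rw [Fin.prod_univ_two]
    simp only [Matrix.cons_val_zero, Matrix.cons_val_one, Matrix.head_cons,
      Polynomial.eval_mul, Polynomial.eval_C, Polynomial.eval_pow, Polynomial.eval_X]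
    rw [units_zpow_coe x _ h0, units_zpow_coe y₀ _ h1]
    ring
  -- counting
  have hZ : (Finset.univ.filter fun x : Kˣ => r.eval (x:K) = 0).card ≤ a.toNat :=
    (card_zero_le r hr0).trans hrdeg
  have hsplit := Finset.card_filter_add_card_filter_not
      (s := (Finset.univ : Finset Kˣ)) (p := fun x : Kˣ => r.eval (x:K) = 0)
  rw [hcardU] at hsplit
  have hNZ : (Finset.univ.filter fun x : Kˣ => ¬ r.eval (x:K) = 0).card ≤
      (Finset.univ.filter fun P : Fin 2 → Kˣ => laurentEval h P ≠ 0).card := by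
    refine Finset.card_le_card_of_injOn (fun x : Kˣ => ![x, y₀]) ?_ ?_
    · intro x hx
      rw [Finset.mem_coe, Finset.mem_filter] at hx ⊢
      exact ⟨Finset.mem_univ _, by rw [heval]; exact hx.2⟩
    · intro x _ y _ hxy
      have := congrFun hxy 0
      simpa using this
  omega

lemma laurentEval_sub' {K : Type} [Field K] {r : ℕ}
    (f g : (Fin r → ℤ) →₀ K) (P : Fin r → Kˣ) :
    laurentEval (f - g) P = laurentEval f P - laurentEval g P := by
  show ((f - g).sum fun u c => c * ∏ i, ((P i ^ u i : Kˣ) : K)) = _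
  rw [Finsupp.sum_sub_index]
  · rfl
  · intros; ring

/-- reconstruction threshold on the toric surface: for `U` the
lattice points of the polytope with vertices `(0,0), (a,0), (b,q−2), (0,q−2)`
(`0 ≤ b ≤ a ≤ q−2`), any `(q−1)² − (q−1−a) + 1` shares determine the secret. -/
theorem stmt13 {K : Type} [Field K] [Fintype K]
    (q : ℕ) (hq : Fintype.card K = q) (hq3 : 3 ≤ q)
    (a b : ℤ) (hb : 0 ≤ b) (hba : b ≤ a) (ha : a ≤ (q : ℤ) - 2)
    (U : Set (Fin 2 → ℤ))
    (hU : U = {u : Fin 2 → ℤ | 0 ≤ u 1 ∧ u 1 ≤ (q : ℤ) - 2 ∧ 0 ≤ u 0 ∧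
        ((q : ℤ) - 2) * u 0 ≤ a * ((q : ℤ) - 2) + (b - a) * u 1})
    (P₀ : Fin 2 → Kˣ) (A : Finset (Fin 2 → Kˣ)) (hP₀ : P₀ ∉ A)
    (hA : ((q : ℤ) - 1) ^ 2 - ((q : ℤ) - 1 - a) + 1 ≤ (A.card : ℤ))
    (f g : (Fin 2 → ℤ) →₀ K) (hf : ↑f.support ⊆ U) (hg : ↑g.support ⊆ U)
    (hfg : ∀ P ∈ A, laurentEval f P = laurentEval g P) :
    laurentEval f P₀ = laurentEval g P₀ := by
  set h : (Fin 2 → ℤ) →₀ K := f - g with hh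
  have hsupp : ∀ u ∈ h.support, 0 ≤ u 0 ∧ u 0 ≤ a ∧ 0 ≤ u 1 ∧ u 1 ≤ (q:ℤ) - 2 := by
    intro u hu
    have hmem : u ∈ U := by
      rcases Finset.mem_union.mp (Finsupp.support_sub hu) with h1 | h1
      · exact hf h1
      · exact hg h1
    rw [hU] at hmem
    obtain ⟨h1, h2, h3, h4⟩ := hmem
    refine ⟨h3, ?_, h1, h2⟩
    nlinarith [mul_nonneg (sub_nonneg.mpr hba) h1]
  suffices hz : h = 0 by
    have h0 : laurentEval (0 : (Fin 2 → ℤ) →₀ K) P₀ = 0 := by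
      rw [laurentEval]; simp
    have := laurentEval_sub' f g P₀
    rw [← hh, hz, h0] at this
    exact sub_eq_zero.mp this.symm
  by_contra hne
  have hkey := key q hq hq3 a h hsupp hne
  -- upper bound on the nonvanishing set
  have hvanish : ∀ P ∈ A, laurentEval h P = 0 := by
    intro P hP
    rw [hh, laurentEval_sub' f g P, hfg P hP, sub_self]
  set S := Finset.univ.filter fun P : Fin 2 → Kˣ => laurentEval h P ≠ 0 with hS
  have hdisj : Disjoint S A := by
    rw [Finset.disjoint_right]
    intro P hP hPS
    exact (Finset.mem_filter.mp hPS).2 (hvanish P hP)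
  have hcard : S.card + A.card ≤ (q - 1) ^ 2 := by
    rw [← Finset.card_union_of_disjoint hdisj]
    calc (S ∪ A).card ≤ (Finset.univ : Finset (Fin 2 → Kˣ)).card :=
          Finset.card_le_card (Finset.subset_univ _)
      _ = (q - 1) ^ 2 := by
          rw [Finset.card_univ, Fintype.card_fun, Fintype.card_fin,
            ← Nat.card_eq_fintype_card, Nat.card_units, Nat.card_eq_fintype_card, hq]
  -- arithmetic contradiction
  have ha0 : 0 ≤ a := le_trans hb hba
  have h1 : ((q:ℤ) - 1) ≤ (a.toNat : ℤ) + (S.card : ℤ) := by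
    have : ((q - 1 : ℕ) : ℤ) ≤ ((a.toNat + S.card : ℕ) : ℤ) := Int.ofNat_le.mpr hkey
    push_cast at this
    omega
  have h2 : ((S.card : ℤ) + (A.card : ℤ)) ≤ ((q:ℤ) - 1) ^ 2 := by
    have : (((S.card + A.card : ℕ)) : ℤ) ≤ (((q - 1) ^ 2 : ℕ) : ℤ) := Int.ofNat_le.mpr hcard
    push_cast at this
    rw [Nat.cast_sub (by omega)] at this
    push_cast at this
    linarith
  have hat : (a.toNat : ℤ) = a := Int.toNat_of_nonneg ha0
  nlinarith [hA, h1, h2]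
end
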